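/- Uniform boundedness of the support of the likelihood-ratio superlevel set: fix c ≥ 2d and define Φ_n = { A = (a^1,...,a^{2d}) ∈ ℝ^{2d} : λ_i := (n + a^i√n)/(2d) are nonnegative integers summing to n and f(λ_1,...,λ_{2d}, cn, n) ≥ 1 }. Then ⋃_{n≥1} Φ_n is a bounded subset of ℝ^{2d}. -/

import Mathlib

open Finset Real

/-- Multinomial coefficient with integer arguments, interpreted as `0`
whenever some argument is negative. -/
def mcoef {ℓ : ℕ} (k : Fin ℓ → ℤ) : ℕ :=
  if ∀ i, 0 ≤ k i then Nat.multinomial Finset.univ (fun i => (k i).toNat) else 0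

/-- The Radon–Nikodym derivative
`f(λ, N, n) = (2d)^n C(N-n; K-λ_1,…,K-λ_{2d}) / C(N; K,…,K)`, `N = 2dK`. -/
noncomputable def rnDeriv (d K n : ℕ) (lam : Fin (2*d) → ℕ) : ℝ :=
  (2*d : ℝ)^n * (mcoef (fun ℓ => (K : ℤ) - (lam ℓ : ℤ)) : ℝ)
    / (Nat.multinomial Finset.univ (fun _ : Fin (2*d) => K) : ℝ)

/-- The superlevel set `Φ_n` of the likelihood ratio, in rescaled coordinates
`λ_i = (n + a^i √n)/(2d)`. -/
def Phi (d : ℕ) (K : ℕ → ℕ) (n : ℕ) : Set (Fin (2*d) → ℝ) :=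
  {A | ∃ lam : Fin (2*d) → ℕ,
    (∀ i, (lam i : ℝ) = ((n : ℝ) + A i * Real.sqrt n) / (2*d)) ∧
    (∑ i, lam i = n) ∧ 1 ≤ rnDeriv d (K n) n lam}

lemma le_orderEmbOfFin (S : Finset ℕ) {n : ℕ} (hcard : S.card = n) (m : Fin n) :
    (m : ℕ) ≤ S.orderEmbOfFin hcard m := by
  rcases m with ⟨m, hm⟩
  induction m with
  | zero => exact Nat.zero_le _
  | succ k ih =>
    have hk : k < n := Nat.lt_of_succ_lt hm
    have h1 : S.orderEmbOfFin hcard ⟨k, hk⟩ < S.orderEmbOfFin hcard ⟨k+1, hm⟩ := by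
      apply (S.orderEmbOfFin hcard).strictMono
      exact Fin.mk_lt_mk.mpr (Nat.lt_succ_self k)
    have h2 := ih hk
    simp only [Fin.val_mk] at h2 ⊢
    omega

lemma count_ge (S : Finset ℕ) {n : ℕ} (hcard : S.card = n) (B q : ℕ)
    (hq : q ≤ (S.filter (fun s => B ≤ s)).card) (m : Fin n) (hm : n ≤ (m : ℕ) + q) :
    B ≤ S.orderEmbOfFin hcard m := by
  by_contra h
  push_neg at h
  have hmn : (m : ℕ) < n := m.isLt
  have hcard2 : (m : ℕ) + 1 ≤ (S.filter (fun s => s < B)).card := by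
    calc (m : ℕ) + 1 = (range ((m:ℕ)+1)).card := (Finset.card_range _).symm
      _ ≤ (S.filter (fun s => s < B)).card := by
          apply Finset.card_le_card_of_injOn
            (fun x => S.orderEmbOfFin hcard ⟨min x (m:ℕ), lt_of_le_of_lt (min_le_right _ _) hmn⟩)
          · intro x hx
            rw [Finset.coe_range, Set.mem_Iio] at hx
            rw [Finset.mem_coe, Finset.mem_filter]
            refine ⟨Finset.orderEmbOfFin_mem S hcard _, ?_⟩
            have hle : S.orderEmbOfFin hcard
                  ⟨min x (m:ℕ), lt_of_le_of_lt (min_le_right _ _) hmn⟩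
                ≤ S.orderEmbOfFin hcard m :=
              (S.orderEmbOfFin hcard).monotone (by rw [Fin.le_def]; exact min_le_right _ _)
            beta_reduce
            omega
          · intro a ha b hb hab
            rw [Finset.coe_range, Set.mem_Iio] at ha hb
            have := (S.orderEmbOfFin hcard).injective hab
            rw [Fin.mk_eq_mk] at this
            omega
  have hdisj : (S.filter (fun s => s < B)).card + (S.filter (fun s => B ≤ s)).card = n := by
    rw [← hcard, ← Finset.card_filter_add_card_filter_not (s := S) (p := fun s => s < B)]
    simp only [not_lt]
  omega

lemma step1 (d K n : ℕ) (hd : 0 < d) (lam : Fin (2*d) → ℕ)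
    (hsum : ∑ i, lam i = n) (hf : 1 ≤ rnDeriv d K n lam) :
    (∀ i, lam i ≤ K) ∧
      (2*d*K).descFactorial n ≤ (2*d)^n * ∏ i, K.descFactorial (lam i) := by
  have hmulpos : 0 < Nat.multinomial (univ : Finset (Fin (2*d))) (fun _ => K) :=
    Nat.multinomial_pos _ _
  have hmulposR : (0:ℝ) < (Nat.multinomial (univ : Finset (Fin (2*d))) (fun _ => K) : ℝ) := by
    exact_mod_cast hmulpos
  rw [rnDeriv, one_le_div hmulposR] at hf
  -- mcoef nonzero
  have hcond : ∀ i : Fin (2*d), 0 ≤ (K : ℤ) - (lam i : ℤ) := by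
    by_contra h
    rw [mcoef, if_neg h] at hf
    push_cast at hf
    linarith
  have hlamK : ∀ i, lam i ≤ K := fun i => by have := hcond i; omega
  have hmc : mcoef (fun ℓ => (K : ℤ) - (lam ℓ : ℤ))
      = Nat.multinomial (univ : Finset (Fin (2*d))) (fun i => K - lam i) := by
    rw [mcoef, if_pos hcond]
    congr 1
    funext i
    exact Int.toNat_sub K (lam i)
  rw [hmc] at hf
  have hfN : Nat.multinomial (univ : Finset (Fin (2*d))) (fun _ => K)
      ≤ (2*d)^n * Nat.multinomial (univ : Finset (Fin (2*d))) (fun i => K - lam i) := by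
    exact_mod_cast hf
  refine ⟨hlamK, ?_⟩
  have hnN : n ≤ 2*d*K := by
    calc n = ∑ i, lam i := hsum.symm
    _ ≤ ∑ _i : Fin (2*d), K := Finset.sum_le_sum (fun i _ => hlamK i)
    _ = 2*d*K := by rw [Finset.sum_const, Finset.card_univ, Fintype.card_fin, smul_eq_mul]
  have hsum1 : ∑ _i : Fin (2*d), K = 2*d*K := by
    rw [Finset.sum_const, Finset.card_univ, Fintype.card_fin, smul_eq_mul]
  have hsum2 : ∑ i, (K - lam i) = 2*d*K - n := by
    have h1 : ∑ i, (K - lam i) + ∑ i, lam i = ∑ _i : Fin (2*d), K := by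
      rw [← Finset.sum_add_distrib]
      exact Finset.sum_congr rfl (fun i _ => by have := hlamK i; omega)
    rw [hsum1, hsum] at h1
    omega
  have A1 : (2*d*K - n).factorial * (2*d*K).descFactorial n = (2*d*K).factorial :=
    Nat.factorial_mul_descFactorial hnN
  have A2 : (∏ i, (K - lam i).factorial) *
      Nat.multinomial (univ : Finset (Fin (2*d))) (fun i => K - lam i)
      = (2*d*K - n).factorial := by
    have := Nat.multinomial_spec (univ : Finset (Fin (2*d))) (fun i => K - lam i)
    rwa [hsum2] at this
  have A3 : (∏ _i : Fin (2*d), K.factorial) *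
      Nat.multinomial (univ : Finset (Fin (2*d))) (fun _ => K) = (2*d*K).factorial := by
    have := Nat.multinomial_spec (univ : Finset (Fin (2*d))) (fun _ : Fin (2*d) => K)
    rwa [hsum1] at this
  have A4 : (∏ _i : Fin (2*d), K.factorial)
      = (∏ i, K.descFactorial (lam i)) * (∏ i, (K - lam i).factorial) := by
    rw [← Finset.prod_mul_distrib]
    exact Finset.prod_congr rfl (fun i _ => by
      rw [mul_comm]
      exact (Nat.factorial_mul_descFactorial (hlamK i)).symm)
  have key : (2*d*K).descFactorial n * (2*d*K - n).factorial
      ≤ ((2*d)^n * ∏ i, K.descFactorial (lam i)) * (2*d*K - n).factorial := by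
    calc (2*d*K).descFactorial n * (2*d*K - n).factorial
        = (2*d*K).factorial := by rw [mul_comm]; exact A1
      _ = (∏ _i : Fin (2*d), K.factorial) *
            Nat.multinomial (univ : Finset (Fin (2*d))) (fun _ => K) := A3.symm
      _ ≤ (∏ _i : Fin (2*d), K.factorial) *
            ((2*d)^n * Nat.multinomial (univ : Finset (Fin (2*d))) (fun i => K - lam i)) :=
          Nat.mul_le_mul_left _ hfN
      _ = ((2*d)^n * ∏ i, K.descFactorial (lam i)) *
            ((∏ i, (K - lam i).factorial) *
              Nat.multinomial (univ : Finset (Fin (2*d))) (fun i => K - lam i)) := by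
          rw [A4]; ring
      _ = ((2*d)^n * ∏ i, K.descFactorial (lam i)) * (2*d*K - n).factorial := by rw [A2]
  exact Nat.le_of_mul_le_mul_right key (Nat.factorial_pos _)

lemma step2 (d K n : ℕ) (lam : Fin (2*d) → ℕ) (hsum : ∑ i, lam i = n) :
    (2*d)^n * ∏ i, K.descFactorial (lam i)
      = ∏ p ∈ (univ : Finset (Fin (2*d))).sigma (fun i => range (lam i)),
          (2*d*K - 2*d*p.2) := by
  rw [Finset.prod_sigma, ← hsum, ← Finset.prod_pow_eq_pow_sum, ← Finset.prod_mul_distrib]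
  refine Finset.prod_congr rfl (fun i _ => ?_)
  calc (2*d)^(lam i) * K.descFactorial (lam i)
      = (∏ _j ∈ range (lam i), (2*d)) * ∏ j ∈ range (lam i), (K - j) := by
        rw [Finset.prod_const, Finset.card_range, Nat.descFactorial_eq_prod_range]
    _ = ∏ j ∈ range (lam i), (2*d)*(K - j) := Finset.prod_mul_distrib.symm
    _ = ∏ j ∈ range (lam i), (2*d*K - 2*d*j) :=
        Finset.prod_congr rfl (fun j _ => Nat.mul_sub _ _ _)

set_option maxHeartbeats 1000000 in
lemma coord_key (d K n : ℕ) (hd : 0 < d) (hn : 1 ≤ n) (hKn : n ≤ K)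
    (lam : Fin (2*d) → ℕ) (hsum : ∑ i, lam i = n) (hlamK : ∀ i, lam i ≤ K)
    (Hdesc : (2*d*K).descFactorial n ≤ (2*d)^n * ∏ i, K.descFactorial (lam i))
    (i : Fin (2*d)) :
    (lam i : ℝ) ≤ (n:ℝ)/(2*(d:ℝ)) + 2 + 2*Real.sqrt ((d:ℝ)*n) := by
  have hd2 : 0 < 2*d := by omega
  set N := 2*d*K with hN
  have hNn : 2*n ≤ N := by
    calc 2*n ≤ 2*d*n := Nat.mul_le_mul_right n (by omega)
    _ ≤ 2*d*K := Nat.mul_le_mul_left _ hKn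
  obtain ⟨μ, hμ1, h2dμ, hμub⟩ : ∃ μ : ℕ, 1 ≤ μ ∧ n + 1 ≤ 2*d*μ ∧ 2*d*μ ≤ n + 2*d := by
    refine ⟨n/(2*d) + 1, Nat.succ_le_succ (Nat.zero_le _), ?_, ?_⟩
    · have h1 := Nat.div_add_mod n (2*d)
      have h2 : n % (2*d) < 2*d := Nat.mod_lt _ (by omega)
      have h3 : 2*d*(n/(2*d) + 1) = 2*d*(n/(2*d)) + 2*d := by rw [Nat.mul_add, Nat.mul_one]
      omega
    · have h1 : n/(2*d)*(2*d) ≤ n := Nat.div_mul_le_self n (2*d)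
      have h3 : 2*d*(n/(2*d) + 1) = n/(2*d)*(2*d) + 2*d := by ring
      omega
  have hdR : (0:ℝ) < (d:ℝ) := by exact_mod_cast hd
  have hμcast : (μ:ℝ) ≤ (n:ℝ)/(2*(d:ℝ)) + 1 := by
    have h1 : (2*(d:ℝ)*μ) ≤ (n:ℝ) + 2*d := by exact_mod_cast hμub
    calc (μ:ℝ) = μ*(2*d)/(2*d) := by field_simp
      _ ≤ ((n:ℝ)+2*d)/(2*d) := by gcongr <;> linarith
      _ = (n:ℝ)/(2*(d:ℝ)) + 1 := by field_simp
  have hsqrt0 : 0 ≤ Real.sqrt ((d:ℝ)*n) := Real.sqrt_nonneg _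
  by_cases hcase : lam i ≤ μ + 1
  · have : (lam i : ℝ) ≤ (μ:ℝ) + 1 := by exact_mod_cast hcase
    linarith
  push_neg at hcase
  set δ : ℕ := lam i - μ with hδ
  have hδ2 : 2 ≤ δ := by omega
  have hlami : lam i = μ + δ := by omega
  have hlamn : lam i ≤ n := by
    rw [← hsum]
    exact Finset.single_le_sum (f := fun j => lam j) (fun j _ => Nat.zero_le _) (mem_univ i)
  have hδn : δ + μ ≤ n := by omega
  have hμ1 : 1 ≤ μ := by omega
  have hδn' : δ ≤ n - 1 := by omega
  -- the encoded finset
  set enc : (Σ _i : Fin (2*d), ℕ) → ℕ := fun p => 2*d*p.2 + (p.1 : ℕ) with henc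
  set Sig := (univ : Finset (Fin (2*d))).sigma (fun j => range (lam j)) with hSig
  have hencinj : ∀ x ∈ Sig, ∀ y ∈ Sig, enc x = enc y → x = y := by
    rintro ⟨a, j⟩ _ ⟨b, l⟩ _ hxy
    simp only [henc] at hxy
    have ha : (a:ℕ) < 2*d := a.isLt
    have hb : (b:ℕ) < 2*d := b.isLt
    have hj : j = l := by
      have h1 : (2*d*j + (a:ℕ)) % (2*d) = (a:ℕ) := by
        rw [Nat.mul_add_mod]; exact Nat.mod_eq_of_lt ha
      have h2 : (2*d*l + (b:ℕ)) % (2*d) = (b:ℕ)  := by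
        rw [Nat.mul_add_mod]; exact Nat.mod_eq_of_lt hb
      have hab : (a:ℕ) = (b:ℕ) := by rw [← h1, ← h2, hxy]
      have : 2*d*j = 2*d*l := by omega
      exact Nat.eq_of_mul_eq_mul_left hd2 this
    subst hj
    have hab : (a:ℕ) = (b:ℕ) := by omega
    simp [Fin.ext_iff, hab]
  set S : Finset ℕ := Sig.image enc with hS
  have hScard : S.card = n := by
    rw [hS, Finset.card_image_of_injOn hencinj, hSig, Finset.card_sigma]
    simpa using hsum
  set e := S.orderEmbOfFin hScard with he
  have hmemS : ∀ s ∈ S, s + 1 ≤ N := by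
    intro s hs
    rw [hS, Finset.mem_image] at hs
    obtain ⟨⟨a, j⟩, hp, rfl⟩ := hs
    rw [hSig, Finset.mem_sigma] at hp
    have hj : j < lam a := by simpa using hp.2
    have hjK : j + 1 ≤ K := le_trans hj (hlamK a)
    have ha : (a:ℕ) < 2*d := a.isLt
    have : 2*d*(j+1) ≤ 2*d*K := Nat.mul_le_mul_left _ hjK
    simp only [henc]
    have h2 : 2*d*(j+1) = 2*d*j + 2*d := by ring
    omega
  -- ℕ product chain
  have H1 : N.descFactorial n ≤ ∏ m : Fin n, (N + 2*d - 1 - e m) := by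
    calc N.descFactorial n ≤ (2*d)^n * ∏ j, K.descFactorial (lam j) := Hdesc
      _ = ∏ p ∈ Sig, (N - 2*d*p.2) := step2 d K n lam hsum
      _ ≤ ∏ p ∈ Sig, (N + 2*d - 1 - enc p) := by
          apply Finset.prod_le_prod' <;> try skip
          intro p hp
          have h1 : enc p + 1 ≤ N := hmemS (enc p) (Finset.mem_image_of_mem enc hp)
          have h2 : (p.1 : ℕ) < 2*d := p.1.isLt
          simp only [henc] at h1 ⊢
          generalize 2*d*p.2 = a at *
          omega
      _ = ∏ s ∈ S, (N + 2*d - 1 - s) := (Finset.prod_image hencinj).symm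
      _ = ∏ m : Fin n, (N + 2*d - 1 - e m) := by
          have himg : Finset.image (fun m : Fin n => e m) univ = S := by
            ext s
            simp only [Finset.mem_image, Finset.mem_univ, true_and]
            rw [← Finset.mem_coe, ← Finset.range_orderEmbOfFin S hScard]
            exact ⟨fun ⟨m, hm⟩ => ⟨m, hm⟩, fun ⟨m, hm⟩ => ⟨m, hm⟩⟩
          rw [← himg, Finset.prod_image (fun x _ y _ h => e.injective h)]
  -- real part
  have hNR2 : (2*(n:ℝ)) ≤ (N:ℝ) := by exact_mod_cast hNn
  have hnR : (1:ℝ) ≤ (n:ℝ) := by exact_mod_cast hn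
  have hNpos : (0:ℝ) < N := by linarith
  set t : ℝ := (N:ℝ) - n + 1 with ht
  have htpos : 0 < t := by rw [ht]; linarith
  set α : ℝ := 2*(d:ℝ)/t with hα
  set β : ℝ := (δ:ℝ)/(N:ℝ) with hβ
  have hδR : (2:ℝ) ≤ (δ:ℝ) := by exact_mod_cast hδ2
  have hδnR : (δ:ℝ) ≤ (n:ℝ) := by
    have : δ ≤ n := by omega
    exact_mod_cast this
  have hαpos : 0 ≤ α := by positivity
  have hβpos : 0 ≤ β := by positivity
  have hβ1 : β ≤ 1 := by
    rw [hβ, div_le_one hNpos]; linarith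
  set cf : Fin n → ℝ := fun m => if n - δ + 1 ≤ (m:ℕ) then 1 - β else 1 + α with hcf
  -- termwise bound
  have hterm : ∀ m : Fin n, ((N + 2*d - 1 - e m : ℕ) : ℝ) ≤ ((N:ℝ) - (m:ℕ)) * cf m := by
    intro m
    have hem1 : e m + 1 ≤ N := hmemS _ (Finset.orderEmbOfFin_mem S hScard m)
    have hmlt : (m:ℕ) < n := m.isLt
    have hmR : ((m:ℕ):ℝ) ≤ (n:ℝ) - 1 := by
      have : (m:ℕ) + 1 ≤ n := hmlt
      have := (Nat.cast_le (α := ℝ)).mpr this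
      push_cast at this; linarith
    have hdRR : (1:ℝ) ≤ (d:ℝ) := by exact_mod_cast hd
    by_cases hb : n - δ + 1 ≤ (m:ℕ)
    · -- bad case
      set k : ℕ := (m:ℕ) - (n - δ) with hk
      have hk1 : 1 ≤ k := by omega
      have hmk : (m:ℕ) = n - δ + k := by omega
      have hkδ : k < δ := by omega
      -- counting
      have hcount : δ - k ≤ (S.filter (fun s => 2*d*(μ+k) ≤ s)).card := by
        have hsub : (Finset.Ico (μ+k) (lam i)).image (fun j => 2*d*j + (i:ℕ))
            ⊆ S.filter (fun s => 2*d*(μ+k) ≤ s) := by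
          intro s hs
          rw [Finset.mem_image] at hs
          obtain ⟨j, hj, rfl⟩ := hs
          rw [Finset.mem_Ico] at hj
          rw [Finset.mem_filter]
          constructor
          · rw [hS, Finset.mem_image]
            refine ⟨⟨i, j⟩, ?_, rfl⟩
            rw [hSig, Finset.mem_sigma]
            exact ⟨mem_univ _, by simpa using hj.2⟩
          · have : 2*d*(μ+k) ≤ 2*d*j := Nat.mul_le_mul_left _ hj.1
            omega
        have hcardT : ((Finset.Ico (μ+k) (lam i)).image (fun j => 2*d*j + (i:ℕ))).card
            = δ - k := by
          rw [Finset.card_image_of_injOn, Nat.card_Ico]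
          · omega
          · intro a _ b _ hab
            simp only at hab
            have : 2*d*a = 2*d*b := by omega
            exact Nat.eq_of_mul_eq_mul_left hd2 this
        calc δ - k = ((Finset.Ico (μ+k) (lam i)).image (fun j => 2*d*j + (i:ℕ))).card :=
              hcardT.symm
          _ ≤ _ := Finset.card_le_card hsub
      have hB : 2*d*(μ+k) ≤ e m := by
        apply count_ge S hScard _ (δ - k) hcount m (by omega)
      have hBB : n + 1 + 2*d*k ≤ 2*d*(μ+k) := by
        rw [Nat.mul_add]; omega
      -- nat bound
      have hknat : N + 2*d - 1 - e m ≤ N - n - k := by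
        have h1 : k - 1 ≤ 2*d*(k-1) := Nat.le_mul_of_pos_left _ hd2
        have h2 : 2*d*(k-1) + 2*d = 2*d*k := by
          rw [← Nat.mul_succ]; congr 1; omega
        omega
      have hc1 : ((N + 2*d - 1 - e m : ℕ) : ℝ) ≤ ((N - n - k : ℕ) : ℝ) := by
        exact_mod_cast hknat
      have hc2 : ((N - n - k : ℕ) : ℝ) = (N:ℝ) - n - k := by
        have h3 : n + k ≤ N := by omega
        have h4 : N - n - k = N - (n + k) := by omega
        rw [h4, Nat.cast_sub h3]; push_cast; ring
      have hmkR : ((m:ℕ):ℝ) = (n:ℝ) - δ + k := by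
        have h5 : (m:ℕ) + δ = n + k := by omega
        have := (Nat.cast_inj (R := ℝ)).mpr h5
        push_cast at this; linarith
      have hcfm : cf m = 1 - β := by rw [hcf]; simp [hb]
      rw [hcfm]
      have h6 : ((N:ℝ) - (m:ℕ)) * β ≤ δ := by
        have h7 : ((N:ℝ) - (m:ℕ)) ≤ N := by
          have : (0:ℝ) ≤ (m:ℕ) := Nat.cast_nonneg _
          linarith
        have h8 : ((N:ℝ) - (m:ℕ)) * β ≤ (N:ℝ) * β :=
          mul_le_mul_of_nonneg_right h7 hβpos
        have h9 : (N:ℝ) * β = δ := by rw [hβ, mul_comm, div_mul_cancel₀ _ (ne_of_gt hNpos)]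
        linarith
      have hkR : (0:ℝ) ≤ (k:ℕ) := Nat.cast_nonneg _
      calc ((N + 2*d - 1 - e m : ℕ) : ℝ) ≤ (N:ℝ) - n - k := by rw [← hc2]; exact hc1
        _ = ((N:ℝ) - (m:ℕ)) - δ := by rw [hmkR]; ring
        _ ≤ ((N:ℝ) - (m:ℕ)) * (1 - β) := by
            have : ((N:ℝ) - (m:ℕ)) * (1 - β) = ((N:ℝ) - (m:ℕ)) - ((N:ℝ) - (m:ℕ)) * β := by
              ring
            linarith
    · -- good case
      have hem0 : (m:ℕ) ≤ e m := le_orderEmbOfFin S hScard m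
      have hcfm : cf m = 1 + α := by rw [hcf]; simp [hb]
      rw [hcfm]
      have hcast : ((N + 2*d - 1 - e m : ℕ) : ℝ) = (N:ℝ) + 2*d - 1 - e m := by
        have h3 : 1 + e m ≤ N + 2*d := by omega
        have h4 : N + 2*d - 1 - e m = N + 2*d - (1 + e m) := by omega
        rw [h4, Nat.cast_sub h3]; push_cast; ring
      rw [hcast]
      have hemR : ((m:ℕ):ℝ) ≤ (e m : ℝ) := by exact_mod_cast hem0
      have h7 : t ≤ (N:ℝ) - (m:ℕ) := by rw [ht]; linarith
      have h8 : t * α ≤ ((N:ℝ) - (m:ℕ)) * α := mul_le_mul_of_nonneg_right h7 hαpos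
      have h9 : t * α = 2*(d:ℝ) := by rw [hα, mul_comm, div_mul_cancel₀ _ (ne_of_gt htpos)]
      have h10 : ((N:ℝ) - (m:ℕ)) * (1 + α) = ((N:ℝ) - (m:ℕ)) + ((N:ℝ) - (m:ℕ)) * α := by
        ring
      linarith
  -- assemble products
  have hQeq : ((N.descFactorial n : ℕ) : ℝ) = ∏ m : Fin n, ((N:ℝ) - (m:ℕ)) := by
    rw [Nat.descFactorial_eq_prod_range, Nat.cast_prod]
    rw [← Fin.prod_univ_eq_prod_range (fun j => ((N - j : ℕ) : ℝ)) n]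
    refine Finset.prod_congr rfl (fun m _ => ?_)
    have hm : (m:ℕ) ≤ N := le_of_lt (lt_of_lt_of_le m.isLt (by omega))
    rw [Nat.cast_sub hm]
  have hQpos : 0 < ∏ m : Fin n, ((N:ℝ) - (m:ℕ)) := by
    apply Finset.prod_pos
    intro m _
    have hmR : ((m:ℕ):ℝ) ≤ (n:ℝ) - 1 := by
      have : (m:ℕ) + 1 ≤ n := m.isLt
      have := (Nat.cast_le (α := ℝ)).mpr this
      push_cast at this; linarith
    linarith
  have Hchain : ∏ m : Fin n, ((N:ℝ) - (m:ℕ))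
      ≤ (∏ m : Fin n, ((N:ℝ) - (m:ℕ))) * ∏ m : Fin n, cf m := by
    calc ∏ m : Fin n, ((N:ℝ) - (m:ℕ)) = ((N.descFactorial n : ℕ) : ℝ) := hQeq.symm
      _ ≤ ((∏ m : Fin n, (N + 2*d - 1 - e m) : ℕ) : ℝ) := by exact_mod_cast H1
      _ = ∏ m : Fin n, ((N + 2*d - 1 - e m : ℕ) : ℝ) := by rw [Nat.cast_prod]
      _ ≤ ∏ m : Fin n, ((N:ℝ) - (m:ℕ)) * cf m := by
          apply Finset.prod_le_prod
          · intro m _; positivity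
          · intro m _; exact hterm m
      _ = (∏ m : Fin n, ((N:ℝ) - (m:ℕ))) * ∏ m : Fin n, cf m := Finset.prod_mul_distrib
  have hprodc : 1 ≤ ∏ m : Fin n, cf m := by
    have := (le_mul_iff_one_le_right hQpos).mp Hchain
    exact this
  -- compute the product of cf
  have hsplit : ∏ m : Fin n, cf m
      = (1 - β) ^ (univ.filter (fun m : Fin n => n - δ + 1 ≤ (m:ℕ))).card
        * (1 + α) ^ (univ.filter (fun m : Fin n => ¬ (n - δ + 1 ≤ (m:ℕ)))).card := by
    rw [hcf, Finset.prod_ite, Finset.prod_const, Finset.prod_const]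
  set b := (univ.filter (fun m : Fin n => n - δ + 1 ≤ (m:ℕ))).card with hbdef
  set g := (univ.filter (fun m : Fin n => ¬ (n - δ + 1 ≤ (m:ℕ)))).card with hgdef
  have hbge : δ - 1 ≤ b := by
    rw [hbdef]
    calc δ - 1 = (range (δ-1)).card := (Finset.card_range _).symm
      _ ≤ _ := by
        apply Finset.card_le_card_of_injOn
          (fun ℓ => (⟨n - δ + 1 + min ℓ (δ - 2), by omega⟩ : Fin n))
        · intro ℓ hℓ
          rw [Finset.coe_range, Set.mem_Iio] at hℓ
          rw [Finset.mem_coe, Finset.mem_filter]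
          exact ⟨mem_univ _, by simp only [Fin.val_mk]; omega⟩
        · intro a ha b' hb' hab
          rw [Finset.coe_range, Set.mem_Iio] at ha hb'
          rw [Fin.mk_eq_mk] at hab
          omega
  have hgle : g ≤ n := by
    rw [hgdef]
    calc (univ.filter (fun m : Fin n => ¬ (n - δ + 1 ≤ (m:ℕ)))).card
        ≤ (univ : Finset (Fin n)).card := Finset.card_filter_le _ _
      _ = n := by simp
  -- exponential bounds
  have hexp1 : (1 - β) ^ b ≤ Real.exp (-β) ^ (δ - 1) := by
    calc (1 - β) ^ b ≤ (1 - β) ^ (δ - 1) :=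
          pow_le_pow_of_le_one (by linarith) (by linarith) hbge
      _ ≤ Real.exp (-β) ^ (δ - 1) := by
          apply pow_le_pow_left₀ (by linarith)
          have := Real.add_one_le_exp (-β)
          linarith
  have hexp2 : (1 + α) ^ g ≤ Real.exp α ^ n := by
    calc (1 + α) ^ g ≤ Real.exp α ^ g := by
          apply pow_le_pow_left₀ (by linarith)
          have := Real.add_one_le_exp α
          linarith
      _ ≤ Real.exp α ^ n := by
          apply pow_le_pow_right₀ _ hgle
          rw [← Real.exp_zero]
          exact Real.exp_le_exp.mpr hαpos
  have hkey : ((δ - 1 : ℕ) : ℝ) * β ≤ (n:ℝ) * α := by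
    have h1 : (1:ℝ) ≤ Real.exp (-β) ^ (δ - 1) * Real.exp α ^ n := by
      calc (1:ℝ) ≤ ∏ m : Fin n, cf m := hprodc
        _ = (1 - β)^b * (1 + α)^g := hsplit
        _ ≤ Real.exp (-β) ^ (δ - 1) * Real.exp α ^ n := by
            apply mul_le_mul hexp1 hexp2 (by positivity) (by positivity)
    rw [← Real.exp_nat_mul, ← Real.exp_nat_mul, ← Real.exp_add] at h1
    rw [Real.one_le_exp_iff] at h1
    linarith
  -- numeric conclusion
  have hδ1R : ((δ - 1 : ℕ) : ℝ) = (δ:ℝ) - 1 := by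
    rw [Nat.cast_sub (by omega)]; norm_num
  have htN : (N:ℝ)/2 ≤ t := by rw [ht]; linarith
  have hnα : (n:ℝ) * α ≤ 4*(d:ℝ)*n/N := by
    rw [hα]
    have h2 : (n:ℝ) * (2*(d:ℝ)/t) = 2*(d:ℝ)*n/t := by ring
    rw [h2]
    have hNhalf : (0:ℝ) < (N:ℝ)/2 := by linarith
    calc 2*(d:ℝ)*n/t ≤ 2*(d:ℝ)*n/((N:ℝ)/2) := by
          apply div_le_div_of_nonneg_left (by positivity) hNhalf htN
      _ = 4*(d:ℝ)*n/N := by field_simp; ring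
  have hfin : ((δ:ℝ) - 1) * δ ≤ 4*(d:ℝ)*n := by
    have h3 : ((δ:ℝ) - 1) * ((δ:ℝ)/N) ≤ 4*(d:ℝ)*n/N := by
      rw [← hβ]
      calc ((δ:ℝ) - 1) * β ≤ (n:ℝ) * α := by rw [← hδ1R]; exact hkey
        _ ≤ 4*(d:ℝ)*n/N := hnα
    have h4 := mul_le_mul_of_nonneg_right h3 (le_of_lt hNpos)
    have h5 : ((δ:ℝ) - 1) * ((δ:ℝ)/N) * N = ((δ:ℝ) - 1) * δ := by
      rw [mul_assoc, div_mul_cancel₀ _ (ne_of_gt hNpos)]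
    have h6 : 4*(d:ℝ)*n/N * N = 4*(d:ℝ)*n := div_mul_cancel₀ _ (ne_of_gt hNpos)
    rw [h5, h6] at h4
    exact h4
  have hsq : ((δ:ℝ) - 1)^2 ≤ 4*((d:ℝ)*n) := by nlinarith
  have hδle : (δ:ℝ) - 1 ≤ 2 * Real.sqrt ((d:ℝ)*n) := by
    have h7 := Real.sqrt_le_sqrt hsq
    rw [Real.sqrt_sq (by linarith)] at h7
    have h8 : Real.sqrt (4*((d:ℝ)*n)) = 2 * Real.sqrt ((d:ℝ)*n) := by
      rw [show (4:ℝ)*((d:ℝ)*n) = 2^2*((d:ℝ)*n) by norm_num, Real.sqrt_mul (by positivity),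
        Real.sqrt_sq (by norm_num)]
    rw [h8] at h7
    exact h7
  have hlamiR : (lam i : ℝ) = (μ:ℝ) + δ := by exact_mod_cast hlami
  rw [hlamiR]
  linarith

set_option maxHeartbeats 1000000 in
/-- Uniform boundedness of `⋃_{n ≥ 1} Φ_n`. -/
theorem Phi_union_bounded (d : ℕ) (hd : 0 < d) (c : ℝ) (hc : 2*d ≤ c)
    (K : ℕ → ℕ) (hK : ∀ n : ℕ, ((2*d*K n : ℕ) : ℝ) = c * n) :
    Bornology.IsBounded {A : Fin (2*d) → ℝ | ∃ n : ℕ, 1 ≤ n ∧ A ∈ Phi d K n} := by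
  have hdR : (1:ℝ) ≤ (d:ℝ) := by exact_mod_cast hd
  set R : ℝ := 16*(d:ℝ)^3 with hR
  have hRpos : 0 ≤ R := by positivity
  apply Bornology.IsBounded.subset (Metric.isBounded_closedBall (x := 0) (r := R))
  intro A hA
  obtain ⟨n, hn, lam, hcoords, hsum, hf⟩ := hA
  rw [Metric.mem_closedBall, dist_zero_right]
  rw [pi_norm_le_iff_of_nonneg hRpos]
  have hnR : (1:ℝ) ≤ (n:ℝ) := by exact_mod_cast hn
  have hsq1 : (1:ℝ) ≤ Real.sqrt n := by
    rw [show (1:ℝ) = Real.sqrt 1 by rw [Real.sqrt_one]]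
    exact Real.sqrt_le_sqrt (by linarith)
  have hsqpos : (0:ℝ) < Real.sqrt n := by linarith
  -- K n ≥ n
  have hKn : n ≤ K n := by
    have h1 := hK n
    have h2 : (2*(d:ℝ))*(K n) = c * n := by push_cast at h1 ⊢; linarith
    have h3 : (2*(d:ℝ))*n ≤ c * n := by
      apply mul_le_mul_of_nonneg_right _ (by linarith)
      push_cast; linarith
    have h4 : (n:ℝ) ≤ K n := by nlinarith
    exact_mod_cast h4
  obtain ⟨hlamK, Hdesc⟩ := step1 d (K n) n hd lam hsum hf
  -- linear relation
  have hlin : ∀ i, A i * Real.sqrt n = 2*(d:ℝ)*(lam i) - n := by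
    intro i
    have h1 := hcoords i
    have h2 : (2*(d:ℝ)) ≠ 0 := by positivity
    rw [eq_div_iff h2] at h1
    linarith
  -- upper bound on each coordinate
  have hup : ∀ i, A i ≤ 8*(d:ℝ)^2 := by
    intro i
    have hu := coord_key d (K n) n hd hn hKn lam hsum hlamK Hdesc i
    have hsd : Real.sqrt ((d:ℝ)*n) = Real.sqrt d * Real.sqrt n :=
      Real.sqrt_mul (by positivity) _
    have hsdd : Real.sqrt (d:ℝ) ≤ (d:ℝ) := by
      have h5 : Real.sqrt (d:ℝ) ≤ Real.sqrt ((d:ℝ)^2) := Real.sqrt_le_sqrt (by nlinarith)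
      rwa [Real.sqrt_sq (by positivity)] at h5
    have hsd0 : 0 ≤ Real.sqrt (d:ℝ) := Real.sqrt_nonneg _
    have h6 : 2*(d:ℝ) * ((n:ℝ)/(2*(d:ℝ))) = n := by
      rw [mul_div_cancel₀ _ (by positivity : (2*(d:ℝ)) ≠ 0)]
    have h7 : A i * Real.sqrt n ≤ 4*(d:ℝ) + 4*(d:ℝ)*(Real.sqrt d * Real.sqrt n) := by
      have := hlin i
      nlinarith [hu, hdR]
    have h8 : A i * Real.sqrt n ≤ (4*(d:ℝ) + 4*(d:ℝ)*Real.sqrt d) * Real.sqrt n := by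
      have h9 : 4*(d:ℝ) ≤ 4*(d:ℝ) * Real.sqrt n := by nlinarith
      nlinarith
    have h10 : A i ≤ 4*(d:ℝ) + 4*(d:ℝ)*Real.sqrt d :=
      le_of_mul_le_mul_right (by linarith [h8]) hsqpos
    nlinarith
  -- sum of coordinates is zero
  have hsum0 : ∑ i, A i = 0 := by
    have h1 : ∀ i, (lam i:ℝ)*(2*(d:ℝ)) = (n:ℝ) + A i * Real.sqrt n := by
      intro i
      have h2 := hcoords i
      rw [eq_div_iff (by positivity : (2*(d:ℝ)) ≠ 0)] at h2
      exact h2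
    have hcast : (∑ i, (lam i : ℝ)) = (n:ℝ) := by exact_mod_cast hsum
    have h2 : (n:ℝ) * (2*(d:ℝ)) = 2*(d:ℝ)*(n:ℝ) + (∑ i, A i) * Real.sqrt n := by
      calc (n:ℝ)*(2*(d:ℝ)) = (∑ i, (lam i:ℝ))*(2*(d:ℝ)) := by rw [hcast]
        _ = ∑ i, (lam i:ℝ)*(2*(d:ℝ)) := Finset.sum_mul _ _ _
        _ = ∑ i : Fin (2*d), ((n:ℝ) + A i * Real.sqrt n) :=
            Finset.sum_congr rfl (fun i _ => h1 i)
        _ = 2*(d:ℝ)*(n:ℝ) + (∑ i, A i) * Real.sqrt n := by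
            rw [Finset.sum_add_distrib, Finset.sum_const, Finset.card_univ, Fintype.card_fin,
              nsmul_eq_mul, ← Finset.sum_mul]
            push_cast
            ring
    have h3 : (∑ i, A i) * Real.sqrt n = 0 := by linarith
    rcases mul_eq_zero.mp h3 with h4 | h4
    · exact h4
    · exact absurd h4 (by positivity)
  -- lower bound
  have hlow : ∀ i, -R ≤ A i := by
    intro i
    have h3 : ∑ j ∈ univ.erase i, A j + A i = 0 := by
      rw [Finset.sum_erase_add _ _ (mem_univ i)]; exact hsum0
    have h4 : ∑ j ∈ univ.erase i, A j ≤ ((univ.erase i).card : ℝ) * (8*(d:ℝ)^2) := by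
      have := Finset.sum_le_card_nsmul (univ.erase i) A (8*(d:ℝ)^2)
        (fun j _ => hup j)
      rwa [nsmul_eq_mul] at this
    have h5 : ((univ.erase i).card : ℝ) ≤ 2*(d:ℝ) := by
      have h6 : (univ.erase i).card ≤ 2*d := le_trans (Finset.card_erase_le) (by simp)
      exact_mod_cast h6
    have h7 : ∑ j ∈ univ.erase i, A j ≤ 2*(d:ℝ) * (8*(d:ℝ)^2) := by nlinarith
    rw [hR]
    nlinarith
  intro i
  rw [Real.norm_eq_abs, abs_le]
  refine ⟨hlow i, le_trans (hup i) ?_⟩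
  rw [hR]
  nlinarith
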